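/- The limit as n → ∞ of the sum ∑_{k=1}^{n-1} (-1)^k · cos((2k-1)π/(4n-2)) equals -1/2. -/

import Mathlib

open Real Filter Finset

lemma key_id (θ : ℝ) (m : ℕ) :
    2 * Real.cos θ * ∑ k ∈ Finset.Icc 1 m, (-1 : ℝ) ^ k * Real.cos ((2 * (k : ℝ) - 1) * θ)
      = (-1) ^ m * Real.cos (2 * (m : ℝ) * θ) - 1 := by
  induction m with
  | zero => simp
  | succ m ih =>
    rw [Finset.sum_Icc_succ_top (Nat.one_le_iff_ne_zero.mpr (Nat.succ_ne_zero m))]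
    have h2 : Real.cos ((2 * (m : ℝ) + 1) * θ + θ) + Real.cos ((2 * (m : ℝ) + 1) * θ - θ)
        = 2 * Real.cos ((2 * (m : ℝ) + 1) * θ) * Real.cos θ := by
      rw [Real.cos_add, Real.cos_sub]; ring
    have e1 : (2 * (m : ℝ) + 1) * θ + θ = 2 * ((m : ℝ) + 1) * θ := by ring
    have e2 : (2 * (m : ℝ) + 1) * θ - θ = 2 * (m : ℝ) * θ := by ring
    rw [e1, e2] at h2
    push_cast
    have e3 : (2 * ((m : ℝ) + 1) - 1) * θ = (2 * (m : ℝ) + 1) * θ := by ring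
    rw [e3]
    push_cast at ih
    linear_combination ih + (-1:ℝ)^m * h2

theorem stmt0 :
    Tendsto (fun n : ℕ =>
      ∑ k ∈ Finset.Icc 1 (n - 1),
        (-1 : ℝ) ^ k * Real.cos ((2 * (k : ℝ) - 1) * Real.pi / (4 * (n : ℝ) - 2)))
      atTop (nhds (-1 / 2)) := by
  have hθ : Tendsto (fun n : ℕ => Real.pi / (4 * (n : ℝ) - 2)) atTop (nhds 0) := by
    apply Tendsto.div_atTop tendsto_const_nhds
    simp only [sub_eq_add_neg]
    exact tendsto_atTop_add_const_right _ (-2)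
      ((tendsto_natCast_atTop_atTop (R := ℝ)).const_mul_atTop (by norm_num))
  have hcos : Tendsto (fun n : ℕ => Real.cos (Real.pi / (4 * (n : ℝ) - 2))) atTop (nhds 1) := by
    simpa [Function.comp_def] using (Real.continuous_cos.tendsto 0).comp hθ
  have hsin : Tendsto (fun n : ℕ => Real.sin (Real.pi / (4 * (n : ℝ) - 2))) atTop (nhds 0) := by
    simpa [Function.comp_def] using (Real.continuous_sin.tendsto 0).comp hθ
  have hnum : Tendsto (fun n : ℕ => (-1 : ℝ) ^ (n - 1) * Real.sin (Real.pi / (4 * (n : ℝ) - 2)))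
      atTop (nhds 0) := by
    have habs : Tendsto (fun n : ℕ => |Real.sin (Real.pi / (4 * (n : ℝ) - 2))|)
        atTop (nhds 0) := by simpa using hsin.abs
    exact squeeze_zero_norm (fun n => by
      rw [Real.norm_eq_abs, abs_mul, abs_pow, abs_neg, abs_one, one_pow, one_mul]) habs
  have hg : Tendsto (fun n : ℕ =>
      ((-1 : ℝ) ^ (n - 1) * Real.sin (Real.pi / (4 * (n : ℝ) - 2)) - 1) /
        (2 * Real.cos (Real.pi / (4 * (n : ℝ) - 2)))) atTop (nhds (-1 / 2)) := by
    have := (hnum.sub (tendsto_const_nhds (x := (1 : ℝ)))).div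
      ((tendsto_const_nhds (x := (2 : ℝ))).mul hcos) (by norm_num)
    convert this using 2
    all_goals norm_num
  apply Tendsto.congr' ?_ hg
  filter_upwards [eventually_ge_atTop 2] with n hn
  have h42 : (0 : ℝ) < 4 * (n : ℝ) - 2 := by
    have : (2 : ℝ) ≤ (n : ℝ) := by exact_mod_cast hn
    linarith
  set θ := Real.pi / (4 * (n : ℝ) - 2) with hθdef
  have hθpos : 0 < θ := div_pos Real.pi_pos h42
  have hθlt : θ < Real.pi / 2 := by
    apply div_lt_div_of_pos_left Real.pi_pos two_pos
    have : (2 : ℝ) ≤ (n : ℝ) := by exact_mod_cast hn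
    linarith
  have hcospos : 0 < Real.cos θ := Real.cos_pos_of_mem_Ioo ⟨by linarith [Real.pi_pos], hθlt⟩
  have hcast : ((n - 1 : ℕ) : ℝ) = (n : ℝ) - 1 := by
    have : 1 ≤ n := by omega
    push_cast [this]
    ring
  have hangle : 2 * ((n : ℝ) - 1) * θ = Real.pi / 2 - θ := by
    rw [hθdef]
    have hne : (4 * (n : ℝ) - 2) ≠ 0 := h42.ne'
    field_simp
    have hx : (4 * (n : ℝ) - 2) * (4 * (n : ℝ) - 2)⁻¹ = 1 := mul_inv_cancel₀ hne
    linear_combination hx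
  have hk := key_id θ (n - 1)
  rw [hcast, hangle, Real.cos_pi_div_two_sub] at hk
  rw [div_eq_iff (by positivity)]
  have hsum : ∀ k : ℕ, (2 * (k : ℝ) - 1) * θ = (2 * (k : ℝ) - 1) * Real.pi / (4 * (n : ℝ) - 2) := by
    intro k
    rw [hθdef, mul_div_assoc]
  simp only [hsum] at hk
  linear_combination -hk
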